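/- (Error bound with partial client participation.) Let C ⊆ {1,…,N} be the set of selected clients with normalized weights q'_m = q_m / ∑_{m∈C} q_m. Assume each selected client m computes V^t_m with ‖V^t_m − V^{π^t}_m‖_∞ ≤ δ_m and π^{t+1}_m with ‖T^{π^{t+1}_m}_m V^t_m − T_m V^t_m‖_∞ ≤ ε_m, and the global aggregation is π^{t+1} = ∑_{m∈C} q'_m π^{t+1}_m, V̄^t = ∑_{n=1}^N q_n V^t_n (over all clients with ‖V^t_n − V^{π^t}_n‖_∞ ≤ δ_n). Then ‖T^{π^{t+1}}_I V̄^t − T_I V̄^t‖_∞ ≤ ∑_{m∈C} ∑_{n=1}^N q'_m q_n (γ + γ²) R_max κ_{m,n}/(1−γ)² + ∑_{m∈C} q'_m γ R_max κ_{m,I}/(1−γ) + 2γ ∑_{m∈C} q'_m δ_m + 2γ δ̄ + ∑_{m∈C} q'_m ε_m, where δ̄ = ∑_n q_n δ_n. -/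
import Mathlib


open Finset Filter

variable {S A : Type*}

/-- A stochastic policy: for each state, a probability distribution over actions. -/
def IsPolicy [Fintype A] (pi : S → A → ℝ) : Prop :=
  (∀ s a, 0 ≤ pi s a) ∧ ∀ s, ∑ a, pi s a = 1

/-- A transition kernel: for each state-action pair, a probability distribution over states. -/
def IsKernel [Fintype S] (P : S → A → S → ℝ) : Prop :=
  (∀ s a s', 0 ≤ P s a s') ∧ ∀ s a, ∑ s', P s a s' = 1

/-- The policy Bellman operator `T^π` for kernel `P`. -/
def Tpol [Fintype S] [Fintype A] (γ : ℝ) (R : S → A → ℝ) (P : S → A → S → ℝ)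
    (pi : S → A → ℝ) (V : S → ℝ) (s : S) : ℝ :=
  ∑ a, pi s a * (R s a + γ * ∑ s', P s a s' * V s')

/-- The Bellman optimality operator `T` for kernel `P`. -/
noncomputable def Topt [Fintype S] [Fintype A] [Nonempty A] (γ : ℝ) (R : S → A → ℝ)
    (P : S → A → S → ℝ) (V : S → ℝ) (s : S) : ℝ :=
  Finset.univ.sup' Finset.univ_nonempty fun a => R s a + γ * ∑ s', P s a s' * V s'

/-- Heterogeneity measure `κ_{m,n}`: the supremum over policies `π` and states `s` of the
ℓ¹-distance between the induced state transition kernels `P_m^π(·|s)` and `P_n^π(·|s)`. -/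
noncomputable def kappa [Fintype S] [Fintype A] (Pm Pn : S → A → S → ℝ) : ℝ :=
  sSup {x : ℝ | ∃ pi : S → A → ℝ, ∃ s : S, IsPolicy pi ∧
    x = ∑ s', |(∑ a, pi s a * Pm s a s') - ∑ a, pi s a * Pn s a s'|}

/-- Sup-norm of a value function on a finite state space. -/
noncomputable def supNorm [Fintype S] [Nonempty S] (V : S → ℝ) : ℝ := ⨆ s, |V s|

variable [Fintype S] [Fintype A] [Nonempty S] [Nonempty A]


lemma supNorm_le {V : S → ℝ} {c : ℝ} (h : ∀ s, |V s| ≤ c) : supNorm V ≤ c :=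
  ciSup_le h

lemma le_supNorm (V : S → ℝ) (s : S) : |V s| ≤ supNorm V := by
  unfold supNorm
  exact le_ciSup (f := fun s => |V s|) (Set.Finite.bddAbove (Set.finite_range _)) s

lemma swap_sum (pi : S → A → ℝ) (P : S → A → S → ℝ) (V : S → ℝ) (s : S) :
    ∑ a, pi s a * ∑ s', P s a s' * V s' = ∑ s', (∑ a, pi s a * P s a s') * V s' := by
  simp_rw [Finset.mul_sum, Finset.sum_mul, mul_assoc]
  exact Finset.sum_comm

lemma l1_le_kappa {Pm Pn : S → A → S → ℝ} (hPm : IsKernel Pm) (hPn : IsKernel Pn)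
    {pi : S → A → ℝ} (hpi : IsPolicy pi) (s : S) :
    ∑ s', |(∑ a, pi s a * Pm s a s') - ∑ a, pi s a * Pn s a s'| ≤ kappa Pm Pn := by
  apply le_csSup
  · refine ⟨2, ?_⟩
    rintro x ⟨pi', s'', hpi', rfl⟩
    have hb : ∀ (P : S → A → S → ℝ), IsKernel P →
        ∑ s', ∑ a, pi' s'' a * P s'' a s' = 1 := by
      intro P hP
      rw [Finset.sum_comm]
      simp_rw [← Finset.mul_sum, hP.2, mul_one, hpi'.2]
    calc ∑ s', |(∑ a, pi' s'' a * Pm s'' a s') - ∑ a, pi' s'' a * Pn s'' a s'|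
        ≤ ∑ s', ((∑ a, pi' s'' a * Pm s'' a s') + ∑ a, pi' s'' a * Pn s'' a s') := by
          refine Finset.sum_le_sum fun s' _ => ?_
          have hx : (0:ℝ) ≤ ∑ a, pi' s'' a * Pm s'' a s' :=
            Finset.sum_nonneg fun a _ => mul_nonneg (hpi'.1 _ _) (hPm.1 _ _ _)
          have hy : (0:ℝ) ≤ ∑ a, pi' s'' a * Pn s'' a s' :=
            Finset.sum_nonneg fun a _ => mul_nonneg (hpi'.1 _ _) (hPn.1 _ _ _)
          rw [abs_le]; constructor <;> linarith
      _ = 2 := by rw [Finset.sum_add_distrib, hb Pm hPm, hb Pn hPn]; norm_num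
  · exact ⟨pi, s, hpi, rfl⟩

lemma pol_kernel_diff {Pm Pn : S → A → S → ℝ} (hPm : IsKernel Pm) (hPn : IsKernel Pn)
    {pi : S → A → ℝ} (hpi : IsPolicy pi) (V : S → ℝ) (s : S) :
    |(∑ a, pi s a * ∑ s', Pm s a s' * V s') - ∑ a, pi s a * ∑ s', Pn s a s' * V s'|
      ≤ kappa Pm Pn * supNorm V := by
  rw [swap_sum, swap_sum, ← Finset.sum_sub_distrib]
  simp_rw [← sub_mul]
  calc |∑ s', ((∑ a, pi s a * Pm s a s') - ∑ a, pi s a * Pn s a s') * V s'|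
      ≤ ∑ s', |((∑ a, pi s a * Pm s a s') - ∑ a, pi s a * Pn s a s')| * |V s'| := by
        refine le_trans (Finset.abs_sum_le_sum_abs _ _) (le_of_eq ?_)
        exact Finset.sum_congr rfl fun s' _ => abs_mul _ _
    _ ≤ ∑ s', |((∑ a, pi s a * Pm s a s') - ∑ a, pi s a * Pn s a s')| * supNorm V := by
        refine Finset.sum_le_sum fun s' _ => ?_
        exact mul_le_mul_of_nonneg_left (le_supNorm V s') (abs_nonneg _)
    _ = (∑ s', |((∑ a, pi s a * Pm s a s') - ∑ a, pi s a * Pn s a s')|) * supNorm V := by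
        rw [Finset.sum_mul]
    _ ≤ kappa Pm Pn * supNorm V := by
        have h0 : 0 ≤ supNorm V := le_trans (abs_nonneg _) (le_supNorm V (Classical.arbitrary S))
        exact mul_le_mul_of_nonneg_right (l1_le_kappa hPm hPn hpi s) h0

lemma act_kernel_diff {Pm Pn : S → A → S → ℝ} (hPm : IsKernel Pm) (hPn : IsKernel Pn)
    (V : S → ℝ) (s : S) (a : A) :
    |(∑ s', Pm s a s' * V s') - ∑ s', Pn s a s' * V s'| ≤ kappa Pm Pn * supNorm V := by
  classical
  have hdet : IsPolicy (fun (_ : S) (a' : A) => if a' = a then (1:ℝ) else 0) := by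
    constructor
    · intro s a'; by_cases h : a' = a <;> simp [h]
    · intro s; simp
  have := pol_kernel_diff hPm hPn hdet V s
  simpa [ite_mul] using this

lemma sum_mul_sub (P : S → A → S → ℝ) (V W : S → ℝ) (s : S) (a : A) :
    ∑ s', P s a s' * (V s' - W s') = (∑ s', P s a s' * V s') - ∑ s', P s a s' * W s' := by
  rw [← Finset.sum_sub_distrib]; exact Finset.sum_congr rfl fun _ _ => by ring

lemma act_abs_le {P : S → A → S → ℝ} (hP : IsKernel P) (f : S → ℝ) (s : S) (a : A) :
    |∑ s', P s a s' * f s'| ≤ supNorm f := by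
  calc |∑ s', P s a s' * f s'| ≤ ∑ s', |P s a s' * f s'| := Finset.abs_sum_le_sum_abs _ _
    _ ≤ ∑ s', P s a s' * supNorm f := by
        refine Finset.sum_le_sum fun s' _ => ?_
        rw [abs_mul, abs_of_nonneg (hP.1 s a s')]
        exact mul_le_mul_of_nonneg_left (le_supNorm f s') (hP.1 s a s')
    _ = supNorm f := by rw [← Finset.sum_mul, hP.2, one_mul]

lemma pol_abs_le {P : S → A → S → ℝ} (hP : IsKernel P) {pi : S → A → ℝ}
    (hpi : IsPolicy pi) (f : S → ℝ) (s : S) :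
    |∑ a, pi s a * ∑ s', P s a s' * f s'| ≤ supNorm f := by
  calc |∑ a, pi s a * ∑ s', P s a s' * f s'|
      ≤ ∑ a, |pi s a * ∑ s', P s a s' * f s'| := Finset.abs_sum_le_sum_abs _ _
    _ ≤ ∑ a, pi s a * supNorm f := by
        refine Finset.sum_le_sum fun a _ => ?_
        rw [abs_mul, abs_of_nonneg (hpi.1 s a)]
        exact mul_le_mul_of_nonneg_left (act_abs_le hP f s a) (hpi.1 s a)
    _ = supNorm f := by rw [← Finset.sum_mul, hpi.2, one_mul]

lemma Tpol_sub_V {γ : ℝ} (hγ : 0 ≤ γ) (R : S → A → ℝ) {P : S → A → S → ℝ} (hP : IsKernel P)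
    {pi : S → A → ℝ} (hpi : IsPolicy pi) (V W : S → ℝ) (s : S) :
    |Tpol γ R P pi V s - Tpol γ R P pi W s| ≤ γ * supNorm (fun t => V t - W t) := by
  have h : Tpol γ R P pi V s - Tpol γ R P pi W s
      = γ * ∑ a, pi s a * ∑ s', P s a s' * (V s' - W s') := by
    unfold Tpol
    rw [← Finset.sum_sub_distrib, Finset.mul_sum]
    refine Finset.sum_congr rfl fun a _ => ?_
    rw [sum_mul_sub]; ring
  rw [h, abs_mul, abs_of_nonneg hγ]
  exact mul_le_mul_of_nonneg_left (pol_abs_le hP hpi _ s) hγ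

lemma Tpol_sub_P {γ : ℝ} (hγ : 0 ≤ γ) (R : S → A → ℝ) {Pm Pn : S → A → S → ℝ}
    (hPm : IsKernel Pm) (hPn : IsKernel Pn) {pi : S → A → ℝ} (hpi : IsPolicy pi)
    (V : S → ℝ) (s : S) :
    |Tpol γ R Pm pi V s - Tpol γ R Pn pi V s| ≤ γ * (kappa Pm Pn * supNorm V) := by
  have h : Tpol γ R Pm pi V s - Tpol γ R Pn pi V s
      = γ * ((∑ a, pi s a * ∑ s', Pm s a s' * V s') - ∑ a, pi s a * ∑ s', Pn s a s' * V s') := by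
    unfold Tpol
    rw [← Finset.sum_sub_distrib, mul_sub, Finset.mul_sum, Finset.mul_sum,
      ← Finset.sum_sub_distrib]
    refine Finset.sum_congr rfl fun a _ => ?_
    ring
  rw [h, abs_mul, abs_of_nonneg hγ]
  exact mul_le_mul_of_nonneg_left (pol_kernel_diff hPm hPn hpi V s) hγ

lemma abs_sup'_sub_sup'_le {f g : A → ℝ} {c : ℝ} (h : ∀ a, |f a - g a| ≤ c) :
    |(Finset.univ.sup' Finset.univ_nonempty f) - Finset.univ.sup' Finset.univ_nonempty g| ≤ c := by
  rw [abs_sub_le_iff]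
  constructor
  · rw [sub_le_iff_le_add]
    refine Finset.sup'_le _ _ fun a _ => ?_
    have h1 := (abs_le.mp (h a)).2
    have h2 := Finset.le_sup' g (Finset.mem_univ a)
    calc f a ≤ g a + c := by linarith
      _ ≤ _ := by linarith
  · rw [sub_le_iff_le_add]
    refine Finset.sup'_le _ _ fun a _ => ?_
    have h1 := (abs_le.mp (h a)).1
    have h2 := Finset.le_sup' f (Finset.mem_univ a)
    calc g a ≤ f a + c := by linarith
      _ ≤ _ := by linarith

lemma Topt_sub_V {γ : ℝ} (hγ : 0 ≤ γ) (R : S → A → ℝ) {P : S → A → S → ℝ} (hP : IsKernel P)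
    (V W : S → ℝ) (s : S) :
    |Topt γ R P V s - Topt γ R P W s| ≤ γ * supNorm (fun t => V t - W t) := by
  unfold Topt
  refine abs_sup'_sub_sup'_le fun a => ?_
  have h : (R s a + γ * ∑ s', P s a s' * V s') - (R s a + γ * ∑ s', P s a s' * W s')
      = γ * ∑ s', P s a s' * (V s' - W s') := by
    rw [sum_mul_sub]; ring
  rw [h, abs_mul, abs_of_nonneg hγ]
  exact mul_le_mul_of_nonneg_left (act_abs_le hP _ s a) hγ

lemma Topt_sub_Pbar {N : ℕ} {γ : ℝ} (hγ : 0 ≤ γ) (R : S → A → ℝ)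
    {P : Fin N → S → A → S → ℝ} (hP : ∀ n, IsKernel (P n))
    {q : Fin N → ℝ} (hq0 : ∀ n, 0 ≤ q n) (hq1 : ∑ n, q n = 1)
    {Pbar : S → A → S → ℝ} (hPbar : ∀ s a s', Pbar s a s' = ∑ j, q j * P j s a s')
    (m : Fin N) (V : S → ℝ) (s : S) :
    |Topt γ R (P m) V s - Topt γ R Pbar V s|
      ≤ γ * ((∑ n, q n * kappa (P m) (P n)) * supNorm V) := by
  unfold Topt
  refine abs_sup'_sub_sup'_le fun a => ?_
  have h1 : ∑ s', Pbar s a s' * V s' = ∑ n, q n * ∑ s', P n s a s' * V s' := by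
    simp_rw [hPbar, Finset.sum_mul, mul_assoc]
    rw [Finset.sum_comm]
    simp_rw [← Finset.mul_sum]
  have h2 : ∑ s', P m s a s' * V s' = ∑ n, q n * ∑ s', P m s a s' * V s' := by
    rw [← Finset.sum_mul, hq1, one_mul]
  have h : (R s a + γ * ∑ s', P m s a s' * V s') - (R s a + γ * ∑ s', Pbar s a s' * V s')
      = γ * ∑ n, q n * ((∑ s', P m s a s' * V s') - ∑ s', P n s a s' * V s') := by
    calc (R s a + γ * ∑ s', P m s a s' * V s') - (R s a + γ * ∑ s', Pbar s a s' * V s')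
        = γ * ((∑ n, q n * ∑ s', P m s a s' * V s') - ∑ n, q n * ∑ s', P n s a s' * V s') := by
          rw [h1, ← h2]; ring
      _ = _ := by
          rw [← Finset.sum_sub_distrib]
          rw [Finset.mul_sum, Finset.mul_sum]
          refine Finset.sum_congr rfl fun n _ => ?_
          ring
  rw [h, abs_mul, abs_of_nonneg hγ]
  refine mul_le_mul_of_nonneg_left ?_ hγ
  calc |∑ n, q n * ((∑ s', P m s a s' * V s') - ∑ s', P n s a s' * V s')|
      ≤ ∑ n, |q n * ((∑ s', P m s a s' * V s') - ∑ s', P n s a s' * V s')| :=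
        Finset.abs_sum_le_sum_abs _ _
    _ ≤ ∑ n, q n * (kappa (P m) (P n) * supNorm V) := by
        refine Finset.sum_le_sum fun n _ => ?_
        rw [abs_mul, abs_of_nonneg (hq0 n)]
        exact mul_le_mul_of_nonneg_left (act_kernel_diff (hP m) (hP n) V s a) (hq0 n)
    _ = (∑ n, q n * kappa (P m) (P n)) * supNorm V := by
        rw [Finset.sum_mul]
        exact Finset.sum_congr rfl fun n _ => by ring

lemma supNorm_sub_comm (V W : S → ℝ) :
    supNorm (fun s => V s - W s) = supNorm (fun s => W s - V s) := by
  unfold supNorm; simp_rw [abs_sub_comm]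

lemma kappa_nonneg {Pm Pn : S → A → S → ℝ} (hPm : IsKernel Pm) (hPn : IsKernel Pn) :
    0 ≤ kappa Pm Pn := by
  classical
  have hdet : IsPolicy (fun (_ : S) (a' : A) => if a' = Classical.arbitrary A then (1:ℝ) else 0) := by
    constructor
    · intro s a'; by_cases h : a' = Classical.arbitrary A <;> simp [h]
    · intro s; simp
  exact le_trans (Finset.sum_nonneg fun _ _ => abs_nonneg _)
    (l1_le_kappa hPm hPn hdet (Classical.arbitrary S))

lemma Tpol_abs_le {γ Rmax : ℝ} (hγ0 : 0 ≤ γ) {R : S → A → ℝ}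
    (hR : ∀ s a, 0 ≤ R s a ∧ R s a ≤ Rmax) {P : S → A → S → ℝ} (hP : IsKernel P)
    {pi : S → A → ℝ} (hpi : IsPolicy pi) (V : S → ℝ) (s : S) :
    |Tpol γ R P pi V s| ≤ Rmax + γ * supNorm V := by
  unfold Tpol
  calc |∑ a, pi s a * (R s a + γ * ∑ s', P s a s' * V s')|
      ≤ ∑ a, |pi s a * (R s a + γ * ∑ s', P s a s' * V s')| := Finset.abs_sum_le_sum_abs _ _
    _ ≤ ∑ a, pi s a * (Rmax + γ * supNorm V) := by
        refine Finset.sum_le_sum fun a _ => ?_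
        rw [abs_mul, abs_of_nonneg (hpi.1 s a)]
        refine mul_le_mul_of_nonneg_left ?_ (hpi.1 s a)
        refine le_trans (abs_add_le _ _) ?_
        have h1 : |R s a| ≤ Rmax := by rw [abs_of_nonneg (hR s a).1]; exact (hR s a).2
        have h2 : |γ * ∑ s', P s a s' * V s'| ≤ γ * supNorm V := by
          rw [abs_mul, abs_of_nonneg hγ0]
          exact mul_le_mul_of_nonneg_left (act_abs_le hP V s a) hγ0
        linarith
    _ = Rmax + γ * supNorm V := by rw [← Finset.sum_mul, hpi.2, one_mul]

lemma fixedpoint_bound {γ Rmax : ℝ} (hγ0 : 0 ≤ γ) (hγ1 : γ < 1) {R : S → A → ℝ}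
    (hR : ∀ s a, 0 ≤ R s a ∧ R s a ≤ Rmax) {P : S → A → S → ℝ} (hP : IsKernel P)
    {pi : S → A → ℝ} (hpi : IsPolicy pi) {V : S → ℝ}
    (hV : ∀ s, V s = Tpol γ R P pi V s) : supNorm V ≤ Rmax / (1 - γ) := by
  have h1γ : (0:ℝ) < 1 - γ := by linarith
  have h1 : supNorm V ≤ Rmax + γ * supNorm V := by
    refine supNorm_le fun s => ?_
    rw [hV s]
    exact Tpol_abs_le hγ0 hR hP hpi V s
  rw [le_div_iff₀ h1γ]
  nlinarith

lemma Vpi_diff_bound {γ Rmax : ℝ} (hγ0 : 0 ≤ γ) (hγ1 : γ < 1) {R : S → A → ℝ}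
    (hR : ∀ s a, 0 ≤ R s a ∧ R s a ≤ Rmax) {Pm Pn : S → A → S → ℝ}
    (hPm : IsKernel Pm) (hPn : IsKernel Pn) {pi : S → A → ℝ} (hpi : IsPolicy pi)
    {Vm Vn : S → ℝ} (hVm : ∀ s, Vm s = Tpol γ R Pm pi Vm s)
    (hVn : ∀ s, Vn s = Tpol γ R Pn pi Vn s) :
    supNorm (fun s => Vm s - Vn s) ≤ γ * kappa Pm Pn * (Rmax / (1 - γ)) / (1 - γ) := by
  have h1γ : (0:ℝ) < 1 - γ := by linarith
  have hκ : 0 ≤ kappa Pm Pn := kappa_nonneg hPm hPn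
  have hVnK : supNorm Vn ≤ Rmax / (1 - γ) := fixedpoint_bound hγ0 hγ1 hR hPn hpi hVn
  have hD : supNorm (fun s => Vm s - Vn s) ≤ γ * supNorm (fun s => Vm s - Vn s)
      + γ * (kappa Pm Pn * (Rmax / (1 - γ))) := by
    refine supNorm_le fun s => ?_
    have hsplit : |Vm s - Vn s| ≤ |Tpol γ R Pm pi Vm s - Tpol γ R Pm pi Vn s|
        + |Tpol γ R Pm pi Vn s - Tpol γ R Pn pi Vn s| := by
      rw [hVm s, hVn s]
      exact abs_sub_le _ _ _
    have h1 := Tpol_sub_V hγ0 R hPm hpi Vm Vn s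
    have h2 := Tpol_sub_P hγ0 R hPm hPn hpi Vn s
    have h3 : kappa Pm Pn * supNorm Vn ≤ kappa Pm Pn * (Rmax / (1 - γ)) :=
      mul_le_mul_of_nonneg_left hVnK hκ
    have h4 : γ * (kappa Pm Pn * supNorm Vn) ≤ γ * (kappa Pm Pn * (Rmax / (1 - γ))) :=
      mul_le_mul_of_nonneg_left h3 hγ0
    calc |Vm s - Vn s| ≤ _ := hsplit
      _ ≤ _ := add_le_add h1 (h2.trans h4)
  rw [le_div_iff₀ h1γ]
  nlinarith [hD]

theorem stmt10 (N : ℕ) (γ Rmax : ℝ) (hγ0 : 0 < γ) (hγ1 : γ < 1)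
    (R : S → A → ℝ) (hR : ∀ s a, 0 ≤ R s a ∧ R s a ≤ Rmax)
    (q : Fin N → ℝ) (hq0 : ∀ n, 0 ≤ q n) (hq1 : ∑ n, q n = 1)
    (P : Fin N → S → A → S → ℝ) (hP : ∀ n, IsKernel (P n))
    (Pbar : S → A → S → ℝ) (hPbar : ∀ s a s', Pbar s a s' = ∑ j, q j * P j s a s')
    (C : Finset (Fin N)) (hC : 0 < ∑ m ∈ C, q m)
    (pit : S → A → ℝ) (hpit : IsPolicy pit)
    (Vpi : Fin N → S → ℝ) (hVpi : ∀ n s, Vpi n s = Tpol γ R (P n) pit (Vpi n) s)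
    (Vt : Fin N → S → ℝ) (δ : Fin N → ℝ)
    (hδ : ∀ n, supNorm (fun s => Vt n s - Vpi n s) ≤ δ n)
    (hVt : ∀ n, supNorm (Vt n) ≤ Rmax / (1 - γ))
    (pinext : Fin N → S → A → ℝ) (hpinext : ∀ n, IsPolicy (pinext n))
    (ε : Fin N → ℝ)
    (hε : ∀ m ∈ C, supNorm (fun s => Tpol γ R (P m) (pinext m) (Vt m) s - Topt γ R (P m) (Vt m) s) ≤ ε m)
    (Vbar : S → ℝ) (hVbar : ∀ s, Vbar s = ∑ n, q n * Vt n s)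
    (piagg : S → A → ℝ)
    (hpiagg : ∀ s a, piagg s a = ∑ m ∈ C, (q m / ∑ k ∈ C, q k) * pinext m s a) :
    supNorm (fun s => Tpol γ R Pbar piagg Vbar s - Topt γ R Pbar Vbar s) ≤
      (∑ m ∈ C, ∑ n, (q m / ∑ k ∈ C, q k) * q n *
          ((γ + γ ^ 2) * Rmax * kappa (P m) (P n) / (1 - γ) ^ 2)) +
        (∑ m ∈ C, (q m / ∑ k ∈ C, q k) * (γ * Rmax * kappa (P m) Pbar / (1 - γ))) +
        2 * γ * (∑ m ∈ C, (q m / ∑ k ∈ C, q k) * δ m) +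
        2 * γ * (∑ n, q n * δ n) +
        ∑ m ∈ C, (q m / ∑ k ∈ C, q k) * ε m := by
  classical
  have h1γ : (0:ℝ) < 1 - γ := by linarith
  have hne : (1:ℝ) - γ ≠ 0 := h1γ.ne'
  have hγ0' : (0:ℝ) ≤ γ := hγ0.le
  have hRmax : 0 ≤ Rmax :=
    le_trans (hR (Classical.arbitrary S) (Classical.arbitrary A)).1
      (hR (Classical.arbitrary S) (Classical.arbitrary A)).2
  have hK0 : 0 ≤ Rmax / (1 - γ) := div_nonneg hRmax h1γ.le
  have hPbarK : IsKernel Pbar := by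
    constructor
    · intro s a s'
      rw [hPbar]
      exact Finset.sum_nonneg fun j _ => mul_nonneg (hq0 j) ((hP j).1 _ _ _)
    · intro s a
      simp_rw [hPbar]
      rw [Finset.sum_comm]
      simp_rw [← Finset.mul_sum, (hP _).2, mul_one]
      exact hq1
  have hq'0 : ∀ m, 0 ≤ q m / ∑ k ∈ C, q k := fun m => div_nonneg (hq0 m) hC.le
  have hq'1 : ∑ m ∈ C, q m / ∑ k ∈ C, q k = 1 := by
    rw [← Finset.sum_div]; exact div_self hC.ne'
  have hVbK : supNorm Vbar ≤ Rmax / (1 - γ) := by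
    refine supNorm_le fun s => ?_
    rw [hVbar]
    calc |∑ n, q n * Vt n s| ≤ ∑ n, |q n * Vt n s| := Finset.abs_sum_le_sum_abs _ _
      _ ≤ ∑ n, q n * (Rmax / (1 - γ)) := by
          refine Finset.sum_le_sum fun n _ => ?_
          rw [abs_mul, abs_of_nonneg (hq0 n)]
          exact mul_le_mul_of_nonneg_left ((le_supNorm _ s).trans (hVt n)) (hq0 n)
      _ = Rmax / (1 - γ) := by rw [← Finset.sum_mul, hq1, one_mul]
  have hVpiD : ∀ m n, supNorm (fun s => Vpi m s - Vpi n s)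
      ≤ γ * kappa (P m) (P n) * (Rmax / (1 - γ)) / (1 - γ) := fun m n =>
    Vpi_diff_bound hγ0' hγ1 hR (hP m) (hP n) hpit (hVpi m) (hVpi n)
  -- bound on ‖Vt m − Vbar‖
  have hDm : ∀ m, supNorm (fun s => Vt m s - Vbar s)
      ≤ δ m + (∑ n, q n * δ n)
        + ∑ n, q n * (γ * kappa (P m) (P n) * (Rmax / (1 - γ)) / (1 - γ)) := by
    intro m
    refine supNorm_le fun s => ?_
    have hsplit : Vt m s - Vbar s
        = ∑ n, q n * ((Vt m s - Vpi m s) + (Vpi m s - Vpi n s) + (Vpi n s - Vt n s)) := by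
      rw [hVbar]
      have h0 : Vt m s = ∑ n, q n * Vt m s := by rw [← Finset.sum_mul, hq1, one_mul]
      calc Vt m s - ∑ n, q n * Vt n s
          = (∑ n, q n * Vt m s) - ∑ n, q n * Vt n s := by rw [← h0]
        _ = ∑ n, (q n * Vt m s - q n * Vt n s) := by rw [Finset.sum_sub_distrib]
        _ = _ := Finset.sum_congr rfl fun n _ => by ring
    rw [hsplit]
    calc |∑ n, q n * ((Vt m s - Vpi m s) + (Vpi m s - Vpi n s) + (Vpi n s - Vt n s))|
        ≤ ∑ n, |q n * ((Vt m s - Vpi m s) + (Vpi m s - Vpi n s) + (Vpi n s - Vt n s))| :=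
          Finset.abs_sum_le_sum_abs _ _
      _ ≤ ∑ n, q n * (δ m + γ * kappa (P m) (P n) * (Rmax / (1 - γ)) / (1 - γ) + δ n) := by
          refine Finset.sum_le_sum fun n _ => ?_
          rw [abs_mul, abs_of_nonneg (hq0 n)]
          refine mul_le_mul_of_nonneg_left ?_ (hq0 n)
          have h1 : |Vt m s - Vpi m s| ≤ δ m := (le_supNorm _ s).trans (hδ m)
          have h2 : |Vpi m s - Vpi n s|
              ≤ γ * kappa (P m) (P n) * (Rmax / (1 - γ)) / (1 - γ) :=
            (le_supNorm _ s).trans (hVpiD m n)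
          have h3 : |Vpi n s - Vt n s| ≤ δ n := by
            rw [abs_sub_comm]; exact (le_supNorm _ s).trans (hδ n)
          calc |(Vt m s - Vpi m s) + (Vpi m s - Vpi n s) + (Vpi n s - Vt n s)|
              ≤ |(Vt m s - Vpi m s) + (Vpi m s - Vpi n s)| + |Vpi n s - Vt n s| := abs_add_le _ _
            _ ≤ |Vt m s - Vpi m s| + |Vpi m s - Vpi n s| + |Vpi n s - Vt n s| := by
                have := abs_add_le (Vt m s - Vpi m s) (Vpi m s - Vpi n s)
                linarith
            _ ≤ _ := by linarith
      _ = δ m + (∑ n, q n * δ n)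
          + ∑ n, q n * (γ * kappa (P m) (P n) * (Rmax / (1 - γ)) / (1 - γ)) := by
          simp_rw [mul_add]
          rw [Finset.sum_add_distrib, Finset.sum_add_distrib, ← Finset.sum_mul, hq1, one_mul]
          ring
  -- per-client pointwise bound
  have hper : ∀ m ∈ C, ∀ s,
      |Tpol γ R Pbar (pinext m) Vbar s - Topt γ R Pbar Vbar s| ≤
        (∑ n, q n * ((γ + γ ^ 2) * Rmax * kappa (P m) (P n) / (1 - γ) ^ 2))
        + γ * Rmax * kappa (P m) Pbar / (1 - γ)
        + 2 * γ * δ m + 2 * γ * (∑ n, q n * δ n) + ε m := by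
    intro m hm s
    have hκI : 0 ≤ kappa (P m) Pbar := kappa_nonneg (hP m) hPbarK
    have hA : |Tpol γ R Pbar (pinext m) Vbar s - Tpol γ R (P m) (pinext m) Vbar s|
        ≤ γ * (kappa (P m) Pbar * (Rmax / (1 - γ))) := by
      rw [abs_sub_comm]
      refine (Tpol_sub_P hγ0' R (hP m) hPbarK (hpinext m) Vbar s).trans ?_
      exact mul_le_mul_of_nonneg_left (mul_le_mul_of_nonneg_left hVbK hκI) hγ0'
    have hB : |Tpol γ R (P m) (pinext m) Vbar s - Tpol γ R (P m) (pinext m) (Vt m) s|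
        ≤ γ * (δ m + (∑ n, q n * δ n)
          + ∑ n, q n * (γ * kappa (P m) (P n) * (Rmax / (1 - γ)) / (1 - γ))) := by
      refine (Tpol_sub_V hγ0' R (hP m) (hpinext m) Vbar (Vt m) s).trans ?_
      rw [supNorm_sub_comm]
      exact mul_le_mul_of_nonneg_left (hDm m) hγ0'
    have hCc : |Tpol γ R (P m) (pinext m) (Vt m) s - Topt γ R (P m) (Vt m) s| ≤ ε m :=
      (le_supNorm _ s).trans (hε m hm)
    have hD : |Topt γ R (P m) (Vt m) s - Topt γ R (P m) Vbar s|
        ≤ γ * (δ m + (∑ n, q n * δ n)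
          + ∑ n, q n * (γ * kappa (P m) (P n) * (Rmax / (1 - γ)) / (1 - γ))) := by
      refine (Topt_sub_V hγ0' R (hP m) (Vt m) Vbar s).trans ?_
      exact mul_le_mul_of_nonneg_left (hDm m) hγ0'
    have hSnn : 0 ≤ ∑ n, q n * kappa (P m) (P n) :=
      Finset.sum_nonneg fun n _ => mul_nonneg (hq0 n) (kappa_nonneg (hP m) (hP n))
    have hE : |Topt γ R (P m) Vbar s - Topt γ R Pbar Vbar s|
        ≤ γ * ((∑ n, q n * kappa (P m) (P n)) * (Rmax / (1 - γ))) := by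
      refine (Topt_sub_Pbar hγ0' R hP hq0 hq1 hPbar m Vbar s).trans ?_
      exact mul_le_mul_of_nonneg_left (mul_le_mul_of_nonneg_left hVbK hSnn) hγ0'
    have htri : |Tpol γ R Pbar (pinext m) Vbar s - Topt γ R Pbar Vbar s|
        ≤ |Tpol γ R Pbar (pinext m) Vbar s - Tpol γ R (P m) (pinext m) Vbar s|
          + |Tpol γ R (P m) (pinext m) Vbar s - Tpol γ R (P m) (pinext m) (Vt m) s|
          + |Tpol γ R (P m) (pinext m) (Vt m) s - Topt γ R (P m) (Vt m) s|
          + |Topt γ R (P m) (Vt m) s - Topt γ R (P m) Vbar s|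
          + |Topt γ R (P m) Vbar s - Topt γ R Pbar Vbar s| := by
      have t1 := abs_sub_le (Tpol γ R Pbar (pinext m) Vbar s)
        (Tpol γ R (P m) (pinext m) Vbar s) (Topt γ R Pbar Vbar s)
      have t2 := abs_sub_le (Tpol γ R (P m) (pinext m) Vbar s)
        (Tpol γ R (P m) (pinext m) (Vt m) s) (Topt γ R Pbar Vbar s)
      have t3 := abs_sub_le (Tpol γ R (P m) (pinext m) (Vt m) s)
        (Topt γ R (P m) (Vt m) s) (Topt γ R Pbar Vbar s)
      have t4 := abs_sub_le (Topt γ R (P m) (Vt m) s)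
        (Topt γ R (P m) Vbar s) (Topt γ R Pbar Vbar s)
      linarith
    have e1 : ∑ n, q n * (γ * kappa (P m) (P n) * (Rmax / (1 - γ)) / (1 - γ))
        = γ * (∑ n, q n * kappa (P m) (P n)) * (Rmax / (1 - γ)) / (1 - γ) := by
      rw [Finset.mul_sum, Finset.sum_mul, Finset.sum_div]
      exact Finset.sum_congr rfl fun n _ => by ring
    have e2 : ∑ n, q n * ((γ + γ ^ 2) * Rmax * kappa (P m) (P n) / (1 - γ) ^ 2)
        = (γ + γ ^ 2) * Rmax * (∑ n, q n * kappa (P m) (P n)) / (1 - γ) ^ 2 := by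
      rw [Finset.mul_sum, Finset.sum_div]
      exact Finset.sum_congr rfl fun n _ => by ring
    have eq1 : γ * (kappa (P m) Pbar * (Rmax / (1 - γ)))
        = γ * Rmax * kappa (P m) Pbar / (1 - γ) := by ring
    have eq2 : 2 * γ * (γ * (∑ n, q n * kappa (P m) (P n)) * (Rmax / (1 - γ)) / (1 - γ))
          + γ * ((∑ n, q n * kappa (P m) (P n)) * (Rmax / (1 - γ)))
        = (γ + γ ^ 2) * Rmax * (∑ n, q n * kappa (P m) (P n)) / (1 - γ) ^ 2 := by
      field_simp
      ring
    calc |Tpol γ R Pbar (pinext m) Vbar s - Topt γ R Pbar Vbar s|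
        ≤ _ := htri
      _ ≤ γ * (kappa (P m) Pbar * (Rmax / (1 - γ)))
          + γ * (δ m + (∑ n, q n * δ n)
            + ∑ n, q n * (γ * kappa (P m) (P n) * (Rmax / (1 - γ)) / (1 - γ)))
          + ε m
          + γ * (δ m + (∑ n, q n * δ n)
            + ∑ n, q n * (γ * kappa (P m) (P n) * (Rmax / (1 - γ)) / (1 - γ)))
          + γ * ((∑ n, q n * kappa (P m) (P n)) * (Rmax / (1 - γ))) := by
          exact add_le_add (add_le_add (add_le_add (add_le_add hA hB) hCc) hD) hE
      _ ≤ _ := by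
          rw [e1, e2, eq1]
          linarith [eq2]
  -- assemble
  refine supNorm_le fun s => ?_
  have h1 : Tpol γ R Pbar piagg Vbar s
      = ∑ m ∈ C, (q m / ∑ k ∈ C, q k) * Tpol γ R Pbar (pinext m) Vbar s := by
    unfold Tpol
    simp_rw [hpiagg, Finset.sum_mul]
    rw [Finset.sum_comm]
    simp_rw [mul_assoc, ← Finset.mul_sum]
  have h2 : Topt γ R Pbar Vbar s
      = ∑ m ∈ C, (q m / ∑ k ∈ C, q k) * Topt γ R Pbar Vbar s := by
    rw [← Finset.sum_mul, hq'1, one_mul]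
  have hdec : Tpol γ R Pbar piagg Vbar s - Topt γ R Pbar Vbar s
      = ∑ m ∈ C, (q m / ∑ k ∈ C, q k)
          * (Tpol γ R Pbar (pinext m) Vbar s - Topt γ R Pbar Vbar s) := by
    conv_lhs => rw [h1, h2]
    rw [← Finset.sum_sub_distrib]
    exact Finset.sum_congr rfl fun m _ => by ring
  rw [hdec]
  calc |∑ m ∈ C, (q m / ∑ k ∈ C, q k)
          * (Tpol γ R Pbar (pinext m) Vbar s - Topt γ R Pbar Vbar s)|
      ≤ ∑ m ∈ C, (q m / ∑ k ∈ C, q k)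
          * |Tpol γ R Pbar (pinext m) Vbar s - Topt γ R Pbar Vbar s| := by
        refine le_trans (Finset.abs_sum_le_sum_abs _ _) (le_of_eq ?_)
        exact Finset.sum_congr rfl fun m _ => by
          rw [abs_mul, abs_of_nonneg (hq'0 m)]
    _ ≤ ∑ m ∈ C, (q m / ∑ k ∈ C, q k)
          * ((∑ n, q n * ((γ + γ ^ 2) * Rmax * kappa (P m) (P n) / (1 - γ) ^ 2))
            + γ * Rmax * kappa (P m) Pbar / (1 - γ)
            + 2 * γ * δ m + 2 * γ * (∑ n, q n * δ n) + ε m) := by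
        exact Finset.sum_le_sum fun m hm =>
          mul_le_mul_of_nonneg_left (hper m hm s) (hq'0 m)
    _ = _ := by
        simp only [mul_add, Finset.sum_add_distrib]
        have g1 : ∑ x ∈ C, (q x / ∑ k ∈ C, q k)
              * ∑ n, q n * ((γ + γ ^ 2) * Rmax * kappa (P x) (P n) / (1 - γ) ^ 2)
            = ∑ m ∈ C, ∑ n, (q m / ∑ k ∈ C, q k) * q n
              * ((γ + γ ^ 2) * Rmax * kappa (P m) (P n) / (1 - γ) ^ 2) := by
          refine Finset.sum_congr rfl fun m _ => ?_
          rw [Finset.mul_sum]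
          exact Finset.sum_congr rfl fun n _ => by ring
        have g3 : ∑ x ∈ C, (q x / ∑ k ∈ C, q k) * (2 * γ * δ x)
            = 2 * γ * ∑ m ∈ C, (q m / ∑ k ∈ C, q k) * δ m := by
          rw [Finset.mul_sum]
          exact Finset.sum_congr rfl fun m _ => by ring
        have g4 : ∑ x ∈ C, (q x / ∑ k ∈ C, q k) * (2 * γ * ∑ n, q n * δ n)
            = 2 * γ * ∑ n, q n * δ n := by
          rw [← Finset.sum_mul, hq'1, one_mul]
        rw [g1, g3, g4]
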